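/- arXiv:0707.2117 — 4 statements merged into one kernel-verified Lean document; each statement's English description precedes it below -/
import Mathlib

section
/- Let G be a finite simple graph such that for every set X of vertices with |X| ≤ m, the open neighborhood satisfies |∂X| > 2|X|. Then G contains a path of length 3m (i.e., a path with 3m edges). -/
open List

namespace PosaAux
variable {V : Type*}

/-- consecutive pairs of a list -/
def pairs : List V → List (V × V)
  | [] => []
  | [_] => []
  | a :: b :: t => (a, b) :: pairs (b :: t)

@[simp] lemma pairs_nil : pairs ([] : List V) = [] := rfl
@[simp] lemma pairs_single (a : V) : pairs [a] = [] := rfl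
@[simp] lemma pairs_cons_cons (a b : V) (t : List V) :
    pairs (a :: b :: t) = (a, b) :: pairs (b :: t) := rfl

lemma pairs_append (x y : List V) (hx : x ≠ []) (hy : y ≠ []) :
    pairs (x ++ y) = pairs x ++ (x.getLast hx, y.head hy) :: pairs y := by
  induction x with
  | nil => simp at hx
  | cons a x ih =>
    cases x with
    | nil =>
      cases y with
      | nil => simp at hy
      | cons b t => simp [pairs]
    | cons c x' =>
      have : (a :: c :: x') ++ y = a :: ((c :: x') ++ y) := by simp
      rw [this, show ((c :: x') ++ y) = c :: (x' ++ y) from by simp] 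
      rw [show pairs (a :: c :: (x'++y)) = (a,c) :: pairs (c :: (x'++y)) from rfl,
        show c :: (x' ++ y) = (c :: x') ++ y from by simp, ih (by simp)]
      simp

lemma pairs_reverse (l : List V) :
    pairs l.reverse = (pairs l).reverse.map Prod.swap := by
  induction l with
  | nil => simp
  | cons a t ih =>
    cases t with
    | nil => simp
    | cons b t' =>
      rw [show (a :: b :: t').reverse = (b :: t').reverse ++ [a] from by simp,
        pairs_append (b :: t').reverse [a] (by simp) (by simp), ih]
      have hgl : ((b :: t').reverse).getLast (by simp) = b := by
        rw [getLast_reverse]; rfl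
      rw [hgl]
      simp

lemma mem_pairs_reverse {l : List V} {a b : V} :
    (a, b) ∈ pairs l.reverse ↔ (b, a) ∈ pairs l := by
  rw [pairs_reverse]
  constructor
  · rintro hm
    simp only [mem_map, mem_reverse] at hm
    obtain ⟨⟨c, d⟩, hc, he⟩ := hm
    simp [Prod.ext_iff] at he
    obtain ⟨rfl, rfl⟩ := he
    exact hc
  · intro hm
    simp only [mem_map, mem_reverse]
    exact ⟨(b, a), hm, rfl⟩

lemma pairs_map_fst (l : List V) : (pairs l).map Prod.fst = l.dropLast := by
  induction l with
  | nil => simp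
  | cons a t ih =>
    cases t with
    | nil => simp
    | cons b t' => simp [ih]

lemma pairs_map_snd (l : List V) : (pairs l).map Prod.snd = l.tail := by
  induction l with
  | nil => simp
  | cons a t ih =>
    cases t with
    | nil => simp
    | cons b t' => simp [ih]

lemma chain'_iff_pairs {R : V → V → Prop} {l : List V} :
    l.Chain' R ↔ ∀ p ∈ pairs l, R p.1 p.2 := by
  induction l with
  | nil => simp [Chain']
  | cons a t ih =>
    cases t with
    | nil => simp [Chain']
    | cons b t' =>
      show IsChain R (a :: b :: t') ↔ _
      rw [isChain_cons_cons, show IsChain R (b :: t') ↔ _ from ih]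
      simp

lemma fst_mem_of_mem_pairs {l : List V} {a b : V} (h : (a, b) ∈ pairs l) : a ∈ l := by
  have := pairs_map_fst l
  have : a ∈ l.dropLast := this ▸ mem_map_of_mem (f := Prod.fst) h
  exact dropLast_subset l this

lemma snd_mem_of_mem_pairs {l : List V} {a b : V} (h : (a, b) ∈ pairs l) : b ∈ l := by
  have := pairs_map_snd l
  have : b ∈ l.tail := this ▸ mem_map_of_mem (f := Prod.snd) h
  exact tail_subset l this


/-- symmetric adjacency along a list -/
def SAdj (l : List V) (a b : V) : Prop := (a, b) ∈ pairs l ∨ (b, a) ∈ pairs l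

lemma SAdj.symm {l : List V} {a b : V} (h : SAdj l a b) : SAdj l b a := h.elim .inr .inl

lemma mem_of_sadj_left {l : List V} {a b : V} (h : SAdj l a b) : a ∈ l :=
  h.elim fst_mem_of_mem_pairs snd_mem_of_mem_pairs

section Rot
variable (x : List V) (u w : V) (y : List V)

lemma rot_eq : x ++ u :: (w :: y).reverse = (x ++ [u]) ++ (w :: y).reverse := by simp

lemma pairs_l_decomp :
    pairs (x ++ u :: w :: y) = pairs (x ++ [u]) ++ (u, w) :: pairs (w :: y) := by
  have : x ++ u :: w :: y = (x ++ [u]) ++ (w :: y) := by simp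
  rw [this, pairs_append (x ++ [u]) (w :: y) (by simp) (by simp)]
  simp

lemma pairs_r_decomp :
    pairs (x ++ u :: (w :: y).reverse)
      = pairs (x ++ [u]) ++ (u, (w :: y).getLast (by simp)) :: pairs ((w :: y).reverse) := by
  rw [rot_eq, pairs_append (x ++ [u]) ((w :: y).reverse) (by simp) (by simp)]
  congr 2
  have := List.head_reverse (l := w :: y) (by simp)
  simpa using this

lemma sadj_rot_iff {v z : V} (hvu : v ≠ u) (hvw : v ≠ w)
    (hvs : v ≠ (w :: y).getLast (by simp)) :
    SAdj (x ++ u :: (w :: y).reverse) v z ↔ SAdj (x ++ u :: w :: y) v z := by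
  unfold SAdj
  rw [pairs_l_decomp, pairs_r_decomp]
  simp only [mem_append, mem_cons, mem_pairs_reverse, Prod.mk.injEq]
  constructor
  · rintro (⟨h | ⟨h1, h2⟩ | h⟩ | ⟨h | ⟨h1, h2⟩ | h⟩)
    · exact .inl (.inl h)
    · exact absurd h1 hvu
    · exact .inr (.inr (.inr h))
    · exact .inr (.inl h)
    · exact absurd h2 hvs
    · exact .inl (.inr (.inr h))
  · rintro (⟨h | ⟨h1, h2⟩ | h⟩ | ⟨h | ⟨h1, h2⟩ | h⟩)
    · exact .inl (.inl h)
    · exact absurd h1 hvu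
    · exact .inr (.inr (.inr h))
    · exact .inr (.inl h)
    · exact absurd h2 hvw
    · exact .inl (.inr (.inr h))

lemma sadj_l_uw : SAdj (x ++ u :: w :: y) u w := by
  left; rw [pairs_l_decomp]; simp

end Rot


lemma getLast?_decomp (x : List V) (u w : V) (y : List V) :
    (x ++ u :: w :: y).getLast? = some ((w :: y).getLast (cons_ne_nil w y)) := by
  rw [getLast?_append, getLast?_cons_cons, getLast?_eq_getLast (l := w :: y) (cons_ne_nil w y)]
  rfl

lemma getLast?_rot (x : List V) (u w : V) (y : List V) :
    (x ++ u :: (w :: y).reverse).getLast? = some w := by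
  rw [getLast?_append, show u :: (w :: y).reverse = [u] ++ (w :: y).reverse from rfl,
    getLast?_append, getLast?_reverse]
  rfl

lemma exists_decomp {l : List V} {a s : V} (ha : a ∈ l) (hs : l.getLast? = some s)
    (hne : a ≠ s) : ∃ x w y, l = x ++ a :: w :: y := by
  induction l with
  | nil => simp at ha
  | cons b t ih =>
    rcases mem_cons.1 ha with rfl | hat
    · cases t with
      | nil => simp at hs; exact absurd hs hne
      | cons w y => exact ⟨[], w, y, rfl⟩
    · have htne : t ≠ [] := ne_nil_of_mem hat
      obtain ⟨c, t', rfl⟩ := exists_cons_of_ne_nil htne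
      rw [getLast?_cons_cons] at hs
      obtain ⟨x, w, y, he⟩ := ih hat hs
      exact ⟨b :: x, w, y, by rw [he]; rfl⟩

lemma length_filter_le_one {α β : Type*} {L : List α} {f : α → β} [DecidableEq β]
    (h : (L.map f).Nodup) (s : β) :
    (L.filter (fun p => f p = s)).length ≤ 1 := by
  induction L with
  | nil => simp
  | cons a L ih =>
    simp only [map_cons, nodup_cons, mem_map] at h
    obtain ⟨hfa, hnd⟩ := h
    by_cases hfas : f a = s
    · have : L.filter (fun p => f p = s) = [] := by
        rw [filter_eq_nil_iff]
        intro x hx hfx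
        exact hfa ⟨x, hx, by simp at hfx; rw [hfx, hfas]⟩
      simp [filter_cons, hfas, this]
    · simp only [filter_cons, if_neg hfas]
      simpa [hfas] using ih hnd

section Graph
variable (G : SimpleGraph V)

inductive Reach (l0 : List V) : List V → Prop
  | base : Reach l0 l0
  | rot {x : List V} {u w : V} {y : List V} (hl : Reach l0 (x ++ u :: w :: y))
      (ha : G.Adj u ((w :: y).getLast (cons_ne_nil w y))) :
      Reach l0 (x ++ u :: (w :: y).reverse)

variable {G} {l0 l : List V}

lemma Reach.perm (h : Reach G l0 l) : l.Perm l0 := by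
  induction h with
  | base => exact Perm.refl _
  | @rot x u w y hl ha ih =>
    exact Perm.trans (Perm.append_left x (Perm.cons u (reverse_perm (w :: y)))) ih

lemma Reach.chain' (hc : l0.Chain' G.Adj) (h : Reach G l0 l) : l.Chain' G.Adj := by
  induction h with
  | base => exact hc
  | @rot x u w y hl ha ih =>
    rw [chain'_iff_pairs] at ih ⊢
    rw [pairs_r_decomp]
    intro p hp
    rcases mem_append.1 hp with hp | hp
    · exact ih p (by rw [pairs_l_decomp]; exact mem_append.2 (.inl hp))
    · rcases mem_cons.1 hp with rfl | hp
      · exact ha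
      · obtain ⟨a, b⟩ := p
        have hba : (b, a) ∈ pairs (w :: y) := mem_pairs_reverse.1 hp
        have : G.Adj b a := ih (b, a)
          (by rw [pairs_l_decomp]; exact mem_append.2 (.inr (mem_cons.2 (.inr hba))))
        exact this.symm

end Graph

lemma walk_of_list {V : Type*} (G : SimpleGraph V) :
    ∀ (t : List V) (a : V), (a :: t).Chain' G.Adj → (a :: t).Nodup →
    ∃ (v : V) (p : G.Walk a v), p.IsPath ∧ p.support = a :: t := by
  intro t
  induction t with
  | nil => exact fun a _ _ => ⟨a, SimpleGraph.Walk.nil, by simp, by simp⟩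
  | cons b t ih =>
    intro a hc hn
    obtain ⟨v, p, hp, hs⟩ := ih b (isChain_cons_cons.1 hc).2 (nodup_cons.1 hn).2
    have hadj : G.Adj a b := (isChain_cons_cons.1 hc).1
    refine ⟨v, SimpleGraph.Walk.cons hadj p, hp.cons ?_, by simp [hs]⟩
    rw [hs]
    exact (nodup_cons.1 hn).1

end PosaAux

open PosaAux

/-- Pósa's lemma: if every nonempty set `X` of at most `m` vertices satisfies
`|∂X| > 2|X|`, then `G` contains a path of length `3m`. -/
theorem posa_lemma {V : Type*} [Fintype V] [DecidableEq V] [Nonempty V]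
    (G : SimpleGraph V) [DecidableRel G.Adj] (m : ℕ)
    (h : ∀ X : Finset V, X.Nonempty → X.card ≤ m →
      2 * X.card < (Finset.univ.filter fun y => y ∉ X ∧ ∃ x ∈ X, G.Adj x y).card) :
    ∃ (u v : V) (p : G.Walk u v), p.IsPath ∧ p.length = 3 * m := by
  classical
  rcases Nat.eq_zero_or_pos m with rfl | hm
  · exact ⟨Classical.arbitrary V, Classical.arbitrary V, SimpleGraph.Walk.nil, by simp, by simp⟩
  -- a longest path l0
  set P : ℕ → Prop := fun k => ∃ l : List V, l ≠ [] ∧ l.Chain' G.Adj ∧ l.Nodup ∧ l.length = k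
    with hPdef
  have hP1 : P 1 := ⟨[Classical.arbitrary V], by simp, by simp [Chain'], by simp, rfl⟩
  have hn1 : 1 ≤ Fintype.card V := Fintype.card_pos
  set L := Nat.findGreatest P (Fintype.card V) with hLdef
  obtain ⟨l0, hl0ne, hl0c, hl0nd, hl0len⟩ : P L := Nat.findGreatest_spec hn1 hP1
  have hmax : ∀ l : List V, l.Chain' G.Adj → l.Nodup → l.length ≤ L := by
    intro l hc hnd
    rcases eq_or_ne l [] with rfl | hne
    · simp
    · exact Nat.le_findGreatest hnd.length_le_card ⟨l, hne, hc, hnd, rfl⟩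
  -- the endpoint set
  set S : Set V := {v | ∃ l, Reach G l0 l ∧ l.getLast? = some v} with hSdef
  set Bad : V → Prop := fun v => v ∈ S ∨ ∃ s ∈ S, SAdj l0 v s with hBdef
  have hSmem : ∀ {l : List V}, Reach G l0 l → ∀ {v}, l.getLast? = some v → v ∈ S := by
    intro l hl v hv
    exact ⟨l, hl, hv⟩
  -- maximality: neighbours of endpoints lie on the path
  have hadjmem : ∀ {l : List V}, Reach G l0 l → ∀ {s v : V},
      l.getLast? = some s → G.Adj s v → v ∈ l := by
    intro l hl s v hs hadj
    by_contra hv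
    have hc' : (l ++ [v]).Chain' G.Adj := by
      show IsChain G.Adj (l ++ [v])
      rw [isChain_append]
      refine ⟨hl.chain' hl0c, isChain_singleton v, ?_⟩
      intro a ha b hb
      simp only [head?_cons, Option.mem_def, Option.some.injEq] at hb
      rw [hs] at ha
      simp only [Option.mem_def, Option.some.injEq] at ha
      subst ha; subst hb
      exact hadj
    have hnd' : (l ++ [v]).Nodup := by
      simp [nodup_append, hl.perm.symm.nodup hl0nd, hv]
      intro a ha hav; exact hv (hav ▸ ha)
    have hle := hmax _ hc' hnd'
    have hleq : l.length = L := hl.perm.length_eq.trans hl0len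
    simp [hleq] at hle
  -- the rotation invariant
  have inv : ∀ l, Reach G l0 l → ∀ v, ¬ Bad v → ∀ z, (SAdj l v z ↔ SAdj l0 v z) := by
    intro l hl
    induction hl with
    | base => exact fun v _ z => Iff.rfl
    | @rot x u w y hl ha ih =>
      intro v hv z
      have hsS : (w :: y).getLast (cons_ne_nil w y) ∈ S :=
        hSmem hl (getLast?_decomp x u w y)
      have hwS : w ∈ S := hSmem (hl.rot ha) (getLast?_rot x u w y)
      have hvu : v ≠ u := by
        rintro rfl
        exact hv (.inr ⟨w, hwS, (ih v hv w).mp (sadj_l_uw x v w y)⟩)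
      have hvw : v ≠ w := by rintro rfl; exact hv (.inl hwS)
      have hvs : v ≠ (w :: y).getLast (cons_ne_nil w y) := by
        rintro rfl; exact hv (.inl hsS)
      rw [sadj_rot_iff x u w y hvu hvw hvs]
      exact ih v hv z
  -- key claim : the boundary of S consists of l0-path-neighbours of S
  have hkey : ∀ v, v ∉ S → (∃ s ∈ S, G.Adj s v) → ∃ s' ∈ S, SAdj l0 v s' := by
    rintro v hv ⟨s, hsS, hadj⟩
    obtain ⟨l, hl, hls⟩ := hsS
    have hvl : v ∈ l := hadjmem hl hls hadj
    have hvs : v ≠ s := by rintro rfl; exact hv ⟨l, hl, hls⟩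
    obtain ⟨x, w, y, rfl⟩ := exists_decomp hvl hls hvs
    have hsval : (w :: y).getLast (cons_ne_nil w y) = s := by
      rw [getLast?_decomp] at hls
      exact Option.some.inj hls
    have ha : G.Adj v ((w :: y).getLast (cons_ne_nil w y)) := hsval ▸ hadj.symm
    have hr : Reach G l0 (x ++ v :: (w :: y).reverse) := hl.rot ha
    have hwS : w ∈ S := hSmem hr (getLast?_rot x v w y)
    by_contra hno
    have hbad : ¬ Bad v := by
      rintro (hb | hb)
      · exact hv hb
      · exact hno hb
    exact hno ⟨w, hwS, (inv _ hl v hbad w).mp (sadj_l_uw x v w y)⟩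
  -- finset versions
  set Sf : Finset V := Finset.univ.filter (· ∈ S) with hSfdef
  have hSfmem : ∀ v : V, v ∈ Sf ↔ v ∈ S := by
    intro v; simp [hSfdef]
  set nbr : V → Finset V := fun s => (((pairs l0).filter (fun p => p.1 = s)).map Prod.snd
      ++ ((pairs l0).filter (fun p => p.2 = s)).map Prod.fst).toFinset with hnbrdef
  have hnbr_card : ∀ s, (nbr s).card ≤ 2 := by
    intro s
    refine le_trans (toFinset_card_le _) ?_
    rw [length_append, length_map, length_map]
    have h1 : ((pairs l0).filter (fun p => p.1 = s)).length ≤ 1 :=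
      length_filter_le_one (by rw [pairs_map_fst]; exact hl0nd.sublist (dropLast_sublist l0)) s
    have h2 : ((pairs l0).filter (fun p => p.2 = s)).length ≤ 1 :=
      length_filter_le_one (by rw [pairs_map_snd]; exact hl0nd.sublist (tail_sublist l0)) s
    omega
  have hnbr_mem : ∀ {v s : V}, SAdj l0 v s → v ∈ nbr s := by
    rintro v s (hvs | hsv)
    · rw [hnbrdef]
      simp only [mem_toFinset, mem_append, mem_map, mem_filter]
      exact .inr ⟨(v, s), ⟨hvs, by simp⟩, rfl⟩
    · rw [hnbrdef]
      simp only [mem_toFinset, mem_append, mem_map, mem_filter]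
      exact .inl ⟨(s, v), ⟨hsv, by simp⟩, rfl⟩
  -- step 1 : S is large
  have hSne : Sf.Nonempty := by
    refine ⟨l0.getLast hl0ne, (hSfmem _).2 ?_⟩
    exact hSmem Reach.base (getLast?_eq_getLast hl0ne)
  have hcard : m < Sf.card := by
    by_contra hle
    push_neg at hle
    have h2 := h Sf hSne hle
    have hsub : (Finset.univ.filter fun y => y ∉ Sf ∧ ∃ x ∈ Sf, G.Adj x y)
        ⊆ Sf.biUnion nbr := by
      intro v hv
      rw [Finset.mem_filter] at hv
      obtain ⟨-, hvS, xx, hxx, hadj⟩ := hv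
      obtain ⟨s', hs'S, hss⟩ := hkey v (fun hc => hvS ((hSfmem v).2 hc))
        ⟨xx, (hSfmem xx).1 hxx, hadj⟩
      exact Finset.mem_biUnion.2 ⟨s', (hSfmem s').2 hs'S, hnbr_mem hss⟩
    have hb1 := Finset.card_le_card hsub
    have hb2 := Finset.card_biUnion_le (s := Sf) (t := nbr)
    have hb3 : ∑ s ∈ Sf, (nbr s).card ≤ 2 * Sf.card := by
      calc ∑ s ∈ Sf, (nbr s).card ≤ ∑ _s ∈ Sf, 2 :=
            Finset.sum_le_sum fun s _ => hnbr_card s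
        _ = 2 * Sf.card := by rw [Finset.sum_const, smul_eq_mul, mul_comm]
    omega
  -- step 2 : the path is long
  obtain ⟨T, hTsub, hTcard⟩ := Finset.exists_subset_card_eq (le_of_lt hcard)
  have hTne : T.Nonempty := Finset.card_pos.mp (by rw [hTcard]; exact hm)
  have h2T := h T hTne (le_of_eq hTcard)
  set B := Finset.univ.filter fun y => y ∉ T ∧ ∃ x ∈ T, G.Adj x y with hBsetdef
  have hTl0 : ∀ v ∈ T, v ∈ l0 := by
    intro v hv
    obtain ⟨l, hl, hls⟩ := (hSfmem v).1 (hTsub hv)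
    exact hl.perm.subset (mem_of_mem_getLast? hls)
  have hBl0 : ∀ v ∈ B, v ∈ l0 := by
    intro v hv
    rw [hBsetdef, Finset.mem_filter] at hv
    obtain ⟨-, -, s, hsT, hadj⟩ := hv
    obtain ⟨l, hl, hls⟩ := (hSfmem s).1 (hTsub hsT)
    exact hl.perm.subset (hadjmem hl hls hadj)
  have hdisj : Disjoint T B := by
    rw [Finset.disjoint_right]
    intro v hv
    rw [hBsetdef, Finset.mem_filter] at hv
    exact hv.2.1
  have hlenlb : 3 * m + 1 ≤ l0.length := by
    have hsub : T ∪ B ⊆ l0.toFinset := by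
      intro v hv
      rcases Finset.mem_union.1 hv with hv | hv
      · exact mem_toFinset.2 (hTl0 v hv)
      · exact mem_toFinset.2 (hBl0 v hv)
    have h1 : (T ∪ B).card ≤ l0.toFinset.card := Finset.card_le_card hsub
    rw [Finset.card_union_of_disjoint hdisj, toFinset_card_of_nodup hl0nd] at h1
    omega
  -- step 3 : truncate and convert to a walk
  set l1 : List V := l0.take (3 * m + 1) with hl1def
  have hl1c : l1.Chain' G.Adj := hl0c.prefix (take_prefix _ _)
  have hl1nd : l1.Nodup := (take_sublist _ _).nodup hl0nd
  have hl1len : l1.length = 3 * m + 1 := by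
    rw [hl1def, length_take]
    omega
  obtain ⟨a, t, hat⟩ : ∃ a t, l1 = a :: t := by
    cases hl1 : l1 with
    | nil => rw [hl1] at hl1len; simp at hl1len
    | cons a t => exact ⟨a, t, rfl⟩
  rw [hat] at hl1c hl1nd hl1len
  simp only [length_cons] at hl1len
  obtain ⟨v, p, hp, hps⟩ := walk_of_list G t a hl1c hl1nd
  refine ⟨a, v, p, hp, ?_⟩
  have := p.length_support
  rw [hps] at this
  simp only [length_cons] at this
  omega
end

section
/- Let H be a graph that is vertex-critical with chromatic number d ≥ 3 (i.e., χ(H) = d and deleting any vertex lowers the chromatic number). Then for any two distinct vertices u, v of H, there exist both a u–v path of odd length and a u–v path of even length in H. -/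
open SimpleGraph

namespace CriticalAux

section Walks
variable {V : Type*} [DecidableEq V] {G : SimpleGraph V}


lemma end_mem_support_tail {p q : V} (w : G.Walk p q) (hw : w.length ≠ 0) :
    q ∈ w.support.tail := by
  cases w with
  | nil => simp at hw
  | cons h r => simpa using r.end_mem_support

lemma isPath_append {a b c : V} {p : G.Walk a b} {q : G.Walk b c}
    (hp : p.IsPath) (hq : q.IsPath)
    (hpq : ∀ x, x ∈ p.support → x ∈ q.support → x = b) :
    (p.append q).IsPath := by
  rw [Walk.isPath_def, Walk.support_append]
  refine List.Nodup.append hp.support_nodup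
    (hq.support_nodup.sublist (List.tail_sublist _)) ?_
  intro x hxp hxq
  have hxb := hpq x hxp (List.mem_of_mem_tail hxq)
  rw [hxb] at hxq
  have := hq.support_nodup
  rw [q.support_eq_cons, List.nodup_cons] at this
  exact this.1 hxq

lemma length_rotate' {a b : V} (c : G.Walk a a) (h : b ∈ c.support) :
    (c.rotate b h).length = c.length := by
  have hs := congrArg Walk.length (c.take_spec h)
  rw [Walk.length_append] at hs
  show ((c.dropUntil b h).append (c.takeUntil b h)).length = c.length
  rw [Walk.length_append]
  omega

lemma mem_support_closed_iff_tail {a : V} (w : G.Walk a a) (hw : w.length ≠ 0) (z : V) :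
    z ∈ w.support ↔ z ∈ w.support.tail := by
  constructor
  · intro hz
    rw [w.support_eq_cons, List.mem_cons] at hz
    rcases hz with rfl | hz
    · exact end_mem_support_tail w hw
    · exact hz
  · exact fun hz => List.mem_of_mem_tail hz

lemma mem_support_rotate {a b z : V} (c : G.Walk a a) (h : b ∈ c.support) (hc : c.length ≠ 0) :
    (z ∈ (c.rotate b h).support ↔ z ∈ c.support) := by
  rw [mem_support_closed_iff_tail _ (by rw [length_rotate']; exact hc),
      mem_support_closed_iff_tail _ hc]
  exact (Walk.support_rotate c b h).perm.mem_iff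

lemma adj_of_length_one {x y : V} (p : G.Walk x y) (hp : p.length = 1) : G.Adj x y := by
  cases p with
  | nil => simp at hp
  | cons h q =>
    have hq : q.length = 0 := by simpa using hp
    have := Walk.eq_of_length_eq_zero hq
    subst this
    exact h

lemma exists_first_hit (S : Set V) : ∀ {a t : V} (w : G.Walk a t), t ∈ S →
    ∃ z : V, z ∈ S ∧ ∃ q : G.Walk a z, q.IsPath ∧
      (∀ y ∈ q.support, y ∈ w.support) ∧ (∀ y ∈ q.support, y ∈ S → y = z) := by
  classical
  have main : ∀ {a t : V} (w : G.Walk a t), t ∈ S →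
      ∃ z : V, z ∈ S ∧ ∃ q : G.Walk a z,
        (∀ y ∈ q.support, y ∈ w.support) ∧ (∀ y ∈ q.support, y ∈ S → y = z) := by
    intro a t w
    induction w with
    | nil =>
      intro ht
      exact ⟨_, ht, Walk.nil, fun y hy => hy, fun y hy _ => by simpa using hy⟩
    | @cons a b t h p ih =>
      intro ht
      by_cases ha : a ∈ S
      · refine ⟨a, ha, Walk.nil, ?_, ?_⟩
        · intro y hy; simp only [Walk.support_nil, List.mem_singleton] at hy; subst hy
          exact Walk.start_mem_support _
        · intro y hy _; simpa using hy
      · obtain ⟨z, hzS, q, hsub, hfirst⟩ := ih ht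
        refine ⟨z, hzS, Walk.cons h q, ?_, ?_⟩
        · intro y hy
          rw [Walk.support_cons, List.mem_cons] at hy
          rw [Walk.support_cons]
          rcases hy with rfl | hy
          · exact List.mem_cons_self
          · exact List.mem_cons_of_mem _ (hsub y hy)
        · intro y hy hyS
          rw [Walk.support_cons, List.mem_cons] at hy
          rcases hy with rfl | hy
          · exact absurd hyS ha
          · exact hfirst y hy hyS
  intro a t w ht
  obtain ⟨z, hz, q, hsub, hfirst⟩ := main w ht
  exact ⟨z, hz, q.bypass, q.bypass_isPath,
    fun y hy => hsub y (q.support_bypass_subset hy),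
    fun y hy => hfirst y (q.support_bypass_subset hy)⟩

lemma cycle_split {a x y : V} (c : G.Walk a a) (hc : c.IsCycle)
    (hx : x ∈ c.support) (hy : y ∈ c.support) (hxy : x ≠ y) :
    ∃ (T : G.Walk x y) (B : G.Walk y x),
      T.IsPath ∧ B.IsPath ∧ T.length + B.length = c.length ∧
      (∀ z ∈ T.support, z ∈ c.support) ∧ (∀ z ∈ B.support, z ∈ c.support) ∧
      (∀ z ∈ T.support, z ∈ B.support → z = x ∨ z = y) ∧
      (∀ z ∈ c.support, z ∈ T.support ∨ z ∈ B.support) := by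
  have hlen0 : c.length ≠ 0 := by have := hc.three_le_length; omega
  have hcxcyc : (c.rotate x hx).IsCycle := hc.rotate hx
  have hcxlen : (c.rotate x hx).length = c.length := by
    have hs := congrArg Walk.length (c.take_spec hx)
    rw [Walk.length_append] at hs
    show ((c.dropUntil x hx).append (c.takeUntil x hx)).length = c.length
    rw [Walk.length_append]; omega
  have hmem : ∀ z : V, z ∈ (c.rotate x hx).support ↔ z ∈ c.support :=
    fun z => mem_support_rotate c hx hlen0
  rcases hrw : c.rotate x hx with _ | ⟨hadj, Q⟩
  · rw [hrw] at hcxlen; simp at hcxlen; omega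
  · rename_i b
    rw [hrw] at hcxcyc hcxlen hmem
    have hQpath : Q.IsPath := ((Walk.cons_isCycle_iff Q hadj).mp hcxcyc).1
    have hyQ : y ∈ Q.support := by
      have := (hmem y).mpr hy
      rw [Walk.support_cons, List.mem_cons] at this
      rcases this with rfl | h'
      · exact absurd rfl hxy
      · exact h'
    set Tk := Q.takeUntil y hyQ with hTk
    set Dr := Q.dropUntil y hyQ with hDr
    have hQspec : Tk.append Dr = Q := Q.take_spec hyQ
    have hQsup : Q.support = Tk.support ++ Dr.support.tail := by
      rw [← hQspec, Walk.support_append]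
    have hQnodup := hQpath.support_nodup
    rw [hQsup, List.nodup_append] at hQnodup
    obtain ⟨hTnodup, hDtailnodup, hdisj⟩ := hQnodup
    have hDrlen : Dr.length ≠ 0 := by
      intro h0
      exact hxy (Walk.eq_of_length_eq_zero h0).symm
    have hxDtail : x ∈ Dr.support.tail := end_mem_support_tail Dr hDrlen
    have hxTk : x ∉ Tk.support := fun hmem' => hdisj _ hmem' _ hxDtail rfl
    refine ⟨Walk.cons hadj Tk, Dr, ?_, hQpath.dropUntil hyQ, ?_, ?_, ?_, ?_, ?_⟩
    · rw [Walk.cons_isPath_iff]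
      exact ⟨hQpath.takeUntil hyQ, hxTk⟩
    · have hlenQ : Tk.length + Dr.length = Q.length := by
        have := congrArg Walk.length hQspec
        rwa [Walk.length_append] at this
      rw [Walk.length_cons]
      rw [Walk.length_cons] at hcxlen
      omega
    · intro z hz
      rw [Walk.support_cons, List.mem_cons] at hz
      rcases hz with rfl | hz
      · exact hx
      · exact (hmem z).mp (by
          rw [Walk.support_cons, List.mem_cons]
          exact Or.inr (Q.support_takeUntil_subset hyQ hz))
    · intro z hz
      exact (hmem z).mp (by
        rw [Walk.support_cons, List.mem_cons]
        exact Or.inr (Q.support_dropUntil_subset hyQ hz))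
    · intro z hzT hzB
      rw [Walk.support_cons, List.mem_cons] at hzT
      rcases hzT with rfl | hzT
      · exact Or.inl rfl
      · rw [Dr.support_eq_cons, List.mem_cons] at hzB
        rcases hzB with rfl | hzB
        · exact Or.inr rfl
        · exact absurd (hdisj _ hzT _ hzB rfl) (fun h => h)
    · intro z hz
      have := (hmem z).mpr hz
      rw [Walk.support_cons, List.mem_cons] at this
      rcases this with rfl | hzQ
      · exact Or.inl (Walk.start_mem_support _)
      · rw [hQsup, List.mem_append] at hzQ
        rcases hzQ with h' | h'
        · exact Or.inl (by rw [Walk.support_cons, List.mem_cons]; exact Or.inr h')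
        · exact Or.inr (List.mem_of_mem_tail h')



lemma closed_path_length_zero {a : V} (q : G.Walk a a) (hq : q.IsPath) : q.length = 0 := by
  cases q with
  | nil => rfl
  | cons h r =>
    rw [Walk.cons_isPath_iff] at hq
    exact absurd r.end_mem_support hq.2

lemma path_edge_end : ∀ {b a : V} (q : G.Walk b a), q.IsPath → s(a, b) ∈ q.edges →
    q.length = 1 := by
  intro b a q hq he
  cases q with
  | nil => simp at he
  | cons h r =>
    rename_i y
    rw [Walk.edges_cons, List.mem_cons] at he
    rw [Walk.cons_isPath_iff] at hq
    rcases he with he | he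
    · rw [Sym2.eq_iff] at he
      rcases he with ⟨rfl, rfl⟩ | ⟨rfl, _⟩
      · exact absurd r.end_mem_support hq.2
      · rw [Walk.length_cons, closed_path_length_zero r hq.1]
    · exact absurd (r.snd_mem_support_of_mem_edges he) hq.2

lemma odd_closed_walk_to_cycle :
    ∀ (n : ℕ) {a : V} (p : G.Walk a a), p.length = n → Odd n →
    ∃ (b : V) (c : G.Walk b b), c.IsCycle ∧ Odd c.length := by
  intro n
  induction n using Nat.strong_induction_on with
  | _ n ih =>
    intro a p hlen hodd
    cases p with
    | nil =>
      rw [Walk.length_nil] at hlen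
      rcases hodd with ⟨k, hk⟩
      omega
    | cons hadj q =>
      rename_i b
      by_cases hcyc : (Walk.cons hadj q).IsCycle
      · exact ⟨a, Walk.cons hadj q, hcyc, by rw [hlen]; exact hodd⟩
      · rw [Walk.cons_isCycle_iff] at hcyc
        push_neg at hcyc
        by_cases hqpath : q.IsPath
        · -- then edge s(a,b) ∈ q.edges, so q has length 1, n = 2, contradiction
          have h1 := path_edge_end q hqpath (hcyc hqpath)
          rw [Walk.length_cons, h1] at hlen
          rcases hodd with ⟨k, hk⟩
          omega
        · -- q has a repeated vertex
          rw [Walk.isPath_def] at hqpath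
          obtain ⟨x, hx2⟩ : ∃ x, 2 ≤ List.count x q.support := by
            by_contra hco
            push_neg at hco
            exact hqpath (List.nodup_iff_count_le_one.mpr fun x => by
              have := hco x; omega)
          have hxq : x ∈ q.support := List.count_pos_iff.mp (by omega)
          have hcount1 := q.count_support_takeUntil_eq_one hxq
          set Tq := q.takeUntil x hxq with hTq
          set Dq := q.dropUntil x hxq with hDq
          have hspecq : Tq.append Dq = q := q.take_spec hxq
          have hqsup : q.support = Tq.support ++ Dq.support.tail := by
            rw [← hspecq, Walk.support_append]
          have hxdrop : x ∈ Dq.support.tail := by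
            have hcnt : List.count x q.support
                = List.count x Tq.support + List.count x Dq.support.tail := by
              rw [hqsup, List.count_append]
            rw [hcount1] at hcnt
            exact List.count_pos_iff.mp (by omega)
          -- decompose dropUntil
          rcases hrw : Dq with _ | ⟨hadj2, r⟩
          · rw [hrw] at hxdrop; simp at hxdrop
          · rename_i y
            rw [hrw] at hxdrop
            rw [Walk.support_cons, List.tail_cons] at hxdrop
            -- closed walk K := cons hadj2 (r.takeUntil x) : x → x
            set K := Walk.cons hadj2 (r.takeUntil x hxdrop) with hK
            -- J := (q.takeUntil x) ++ (r.dropUntil x) : b → a ; C2 := cons hadj J : a → a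
            set J := Tq.append (r.dropUntil x hxdrop) with hJ
            have hlenq : Tq.length + Dq.length = q.length := by
              have := congrArg Walk.length hspecq
              rwa [Walk.length_append] at this
            have hlenr : (r.takeUntil x hxdrop).length + (r.dropUntil x hxdrop).length
                = r.length := by
              have := congrArg Walk.length (r.take_spec hxdrop)
              rwa [Walk.length_append] at this
            have hlendrop : Dq.length = r.length + 1 := by
              rw [hrw, Walk.length_cons]
            have hKJ : K.length + (1 + J.length) = n := by
              rw [hK, hJ, Walk.length_cons, Walk.length_append]
              rw [Walk.length_cons] at hlen
              omega
            have hKpos : 1 ≤ K.length := by rw [hK, Walk.length_cons]; omega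
            by_cases hKodd : Odd K.length
            · exact ih K.length (by omega) K rfl hKodd
            · have hJodd : Odd (Walk.cons hadj J).length := by
                rw [Walk.length_cons]
                rcases Nat.even_or_odd K.length with he | ho
                · rcases he with ⟨k, hk⟩
                  rcases hodd with ⟨m, hm⟩
                  exact ⟨m - k, by omega⟩
                · exact absurd ho hKodd
              exact ih (Walk.cons hadj J).length (by rw [Walk.length_cons]; omega)
                (Walk.cons hadj J) rfl hJodd


lemma cycle_two_vertices {a : V} (c : G.Walk a a) (hc : c.IsCycle) :
    ∃ p q : V, p ≠ q ∧ p ∈ c.support ∧ q ∈ c.support := by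
  rcases c with _ | ⟨hadj, rest⟩
  · exact absurd hc Walk.IsCycle.not_of_nil
  · exact ⟨a, _, hadj.ne, Walk.start_mem_support _,
      by rw [Walk.support_cons]; exact List.mem_cons_of_mem _ (Walk.start_mem_support _)⟩


def PC (G : SimpleGraph V) (n : ℕ) (A : Set V) (f : V → Fin n) : Prop :=
  ∀ ⦃x y : V⦄, x ∈ A → y ∈ A → G.Adj x y → f x ≠ f y

lemma reach_del {n : ℕ} (H : SimpleGraph V)
    (hypcol : ∀ w : V, ∃ f : V → Fin n, PC H n {x | x ≠ w} f)
    (hncol : ¬ H.Colorable n) (w x y : V) (hx : x ≠ w) (hy : y ≠ w) :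
    ∃ p : H.Walk x y, w ∉ p.support := by
  classical
  by_contra hcon
  push_neg at hcon
  set A : Set V := {z | z ≠ w ∧ ∃ p : H.Walk x z, w ∉ p.support} with hA
  have hxA : x ∈ A := by
    refine ⟨hx, Walk.nil, ?_⟩
    intro hmem
    rw [Walk.support_nil, List.mem_singleton] at hmem
    exact hx hmem.symm
  have hyA : y ∉ A := by
    rintro ⟨-, p, hp⟩
    exact hp (hcon p)
  have hwA : w ∉ A := fun h => h.1 rfl
  have hclosed : ∀ a b : V, a ∈ A → H.Adj a b → b ≠ w → b ∈ A := by
    rintro a b ⟨haw, p, hp⟩ hadj hbw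
    refine ⟨hbw, p.concat hadj, ?_⟩
    rw [Walk.support_concat, List.mem_append, List.mem_singleton]
    rintro (h | h)
    · exact hp h
    · exact hbw h.symm
  obtain ⟨f₁, hf₁⟩ := hypcol y
  obtain ⟨f₂, hf₂⟩ := hypcol x
  set σ := Equiv.swap (f₂ w) (f₁ w) with hσ
  set F : V → Fin n := fun z => if z ∈ A then f₁ z else σ (f₂ z) with hF
  have hFw : F w = f₁ w := by
    simp only [hF, if_neg hwA, hσ, Equiv.swap_apply_left]
  have key : ∀ a b : V, H.Adj a b → a ∈ A → F a ≠ F b := by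
    intro a b hadj haA
    have haw : a ≠ y := fun h => hyA (h ▸ haA)
    have hFa : F a = f₁ a := by simp only [hF, if_pos haA]
    by_cases hbA : b ∈ A
    · have hbw : b ≠ y := fun h => hyA (h ▸ hbA)
      rw [hFa]
      have : F b = f₁ b := by simp only [hF, if_pos hbA]
      rw [this]
      exact hf₁ haw hbw hadj
    · have hbw : b = w := by
        by_contra hbw
        exact hbA (hclosed a b haA hadj hbw)
      subst hbw
      rw [hFa, hFw]
      exact hf₁ haw (fun h => hy h.symm) hadj
  apply hncol
  refine ⟨SimpleGraph.Coloring.mk F ?_⟩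
  intro a b hadj
  by_cases haA : a ∈ A
  · exact key a b hadj haA
  · by_cases hbA : b ∈ A
    · exact (key b a hadj.symm hbA).symm
    · have hax : a ≠ x := fun h => haA (h ▸ hxA)
      have hbx : b ≠ x := fun h => hbA (h ▸ hxA)
      simp only [hF, if_neg haA, if_neg hbA]
      exact fun h => hf₂ hax hbx hadj (σ.injective h)

lemma two_nbrs (H : SimpleGraph V)
    (hwalk : ∀ a b : V, Nonempty (H.Walk a b))
    (havoid : ∀ w a b : V, a ≠ w → b ≠ w → ∃ p : H.Walk a b, w ∉ p.support)
    (hbig : ∀ a b : V, ∃ c : V, c ≠ a ∧ c ≠ b) :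
    ∀ x : V, ∃ y z : V, y ≠ z ∧ H.Adj x y ∧ H.Adj x z := by
  intro x
  obtain ⟨y0, hy0, -⟩ := hbig x x
  obtain ⟨p⟩ := hwalk x y0
  rcases p with _ | ⟨h1, p'⟩
  · exact absurd rfl hy0
  · rename_i n₁
    obtain ⟨c, hcx, hcn⟩ := hbig x n₁
    obtain ⟨q, hq⟩ := havoid n₁ x c (fun h => H.irrefl (h ▸ h1)) hcn
    rcases q with _ | ⟨h2, q'⟩
    · exact absurd rfl hcx
    · rename_i n₂
      refine ⟨n₁, n₂, ?_, h1, h2⟩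
      intro h
      apply hq
      rw [h, Walk.support_cons]
      exact List.mem_cons_of_mem _ (Walk.start_mem_support _)

lemma exists_odd_cycle (H : SimpleGraph V)
    (hwalk : ∀ a b : V, Nonempty (H.Walk a b))
    (h2 : ¬ H.Colorable 2) (r : V) :
    ∃ (b : V) (c : H.Walk b b), c.IsCycle ∧ Odd c.length := by
  classical
  have hpar : ∃ (p q : V), H.Adj p q ∧ (H.dist r p) % 2 = (H.dist r q) % 2 := by
    by_contra hcon
    push_neg at hcon
    apply h2
    refine ⟨SimpleGraph.Coloring.mk
      (fun z => (⟨H.dist r z % 2, Nat.mod_lt _ (by omega)⟩ : Fin 2)) ?_⟩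
    intro p q hadj hEq
    rw [Fin.mk.injEq] at hEq
    exact hcon p q hadj hEq
  obtain ⟨p, q, hadj, hpq⟩ := hpar
  have hrp : H.Reachable r p := ⟨(hwalk r p).some⟩
  have hrq : H.Reachable r q := ⟨(hwalk r q).some⟩
  obtain ⟨wp, hwp⟩ := hrp.exists_walk_length_eq_dist
  obtain ⟨wq, hwq⟩ := hrq.exists_walk_length_eq_dist
  set W := wp.append (Walk.cons hadj wq.reverse) with hW
  have hlen : W.length = H.dist r p + (H.dist r q + 1) := by
    rw [hW, Walk.length_append, Walk.length_cons, Walk.length_reverse, hwp, hwq]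
  have hodd : Odd W.length := by
    rw [Nat.odd_iff, hlen]
    omega
  exact odd_closed_walk_to_cycle W.length W rfl hodd

lemma whitney
    (hreach : ∀ a b : V, G.Reachable a b)
    (havoid : ∀ w a b : V, a ≠ w → b ≠ w → ∃ p : G.Walk a b, w ∉ p.support)
    (hdeg : ∀ x : V, ∃ y z : V, y ≠ z ∧ G.Adj x y ∧ G.Adj x z) :
    ∀ u v : V, u ≠ v →
      ∃ (a : V) (c : G.Walk a a), c.IsCycle ∧ u ∈ c.support ∧ v ∈ c.support := by
  classical
  suffices h : ∀ n (u v : V), u ≠ v → G.dist u v = n →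
      ∃ (a : V) (c : G.Walk a a), c.IsCycle ∧ u ∈ c.support ∧ v ∈ c.support by
    intro u v huv
    exact h (G.dist u v) u v huv rfl
  intro n
  induction n using Nat.strong_induction_on with
  | _ n ih =>
    intro u v huv hdist
    have hdpos : G.dist u v ≠ 0 := by
      intro h0
      exact huv ((hreach u v).dist_eq_zero_iff.mp h0)
    rcases Nat.lt_or_ge n 2 with hn2 | hn2
    · -- n = 1 : u ~ v
      have hn1 : n = 1 := by omega
      have hadj : G.Adj u v := SimpleGraph.dist_eq_one_iff_adj.mp (show G.dist u v = 1 by omega)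
      -- find x ≠ u adjacent to v
      obtain ⟨y, z, hyz, hvy, hvz⟩ := hdeg v
      have hxex : ∃ x : V, G.Adj v x ∧ x ≠ u := by
        by_cases h : y = u
        · exact ⟨z, hvz, fun hc => hyz (by rw [h, hc])⟩
        · exact ⟨y, hvy, h⟩
      obtain ⟨x, hvx, hxu⟩ := hxex
      have hxv : x ≠ v := fun h => G.irrefl (h ▸ hvx)
      obtain ⟨q0, hq0⟩ := havoid v u x (huv) hxv
      set q := q0.bypass with hq
      have hqpath : q.IsPath := q0.bypass_isPath
      have hvq : v ∉ q.support := fun h => hq0 (q0.support_bypass_subset h)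
      -- path u → x → v
      set P := q.concat hvx.symm with hP
      have hPpath : P.IsPath := by
        rw [Walk.isPath_def, hP, Walk.support_concat]
        refine List.Nodup.append hqpath.support_nodup (List.nodup_singleton v) ?_
        intro t ht ht'
        rw [List.mem_singleton] at ht'
        subst ht'
        exact hvq ht
      refine ⟨v, Walk.cons hadj.symm P, ?_, ?_, ?_⟩
      · rw [Walk.cons_isCycle_iff]
        refine ⟨hPpath, ?_⟩
        intro hmem
        rw [hP, Walk.edges_concat, List.concat_eq_append, List.mem_append,
          List.mem_singleton] at hmem
        rcases hmem with h | h
        · exact hvq (q.fst_mem_support_of_mem_edges h)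
        · rw [Sym2.eq_iff] at h
          rcases h with ⟨h1, h2⟩ | ⟨h1, h2⟩
          · exact hxv h1.symm
          · exact hxu h2.symm
      · rw [Walk.support_cons]
        exact List.mem_cons_of_mem _ (Walk.start_mem_support _)
      · exact Walk.start_mem_support _
    · -- n ≥ 2
      have hr : G.Reachable u v := hreach u v
      obtain ⟨p, hp⟩ := hr.exists_walk_length_eq_dist
      rw [hdist] at hp
      rcases hrev : p.reverse with _ | ⟨h₁, p₁⟩
      · have := congrArg Walk.length hrev
        rw [Walk.length_reverse, hp] at this
        simp at this
        omega
      · rename_i w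
        -- h₁ : G.Adj v w, p₁ : Walk w u
        have hlen₁ : p₁.length = n - 1 := by
          have := congrArg Walk.length hrev
          rw [Walk.length_reverse, hp, Walk.length_cons] at this
          omega
        have hdistuw : G.dist u w = n - 1 := by
          have hle : G.dist u w ≤ n - 1 := by
            have := G.dist_le p₁.reverse
            rwa [Walk.length_reverse, hlen₁] at this
          have hne : Nonempty V := ⟨u⟩
          have hconn : G.Connected := ⟨hreach⟩
          have htri : G.dist u v ≤ G.dist u w + G.dist w v := hconn.dist_triangle
          have hwv : G.dist w v ≤ 1 := by
            have := G.dist_le (Walk.cons h₁.symm Walk.nil : G.Walk w v)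
            simpa using this
          omega
        have huw : u ≠ w := by
          intro h
          rw [← h] at hdistuw
          rw [(hreach u u).dist_eq_zero_iff.mpr rfl] at hdistuw
          omega
        obtain ⟨a, C, hC, huC, hwC⟩ := ih (n - 1) (by omega) u w huw hdistuw
        by_cases hvC : v ∈ C.support
        · exact ⟨a, C, hC, huC, hvC⟩
        · have hvw : v ≠ w := fun h => G.irrefl (h ▸ h₁)
          obtain ⟨R0, hR0⟩ := havoid w v u hvw huw
          obtain ⟨z₁, hz₁C, R', hR'path, hR'sub, hR'first⟩ :=
            exists_first_hit {t | t ∈ C.support} R0.bypass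
              (by exact huC : u ∈ {t | t ∈ C.support})
          have hwR' : w ∉ R'.support := fun h =>
            hR0 (R0.support_bypass_subset (hR'sub w h))
          have hz₁w : z₁ ≠ w := fun h => hwR' (h ▸ Walk.end_mem_support R')
          obtain ⟨T, B, hTpath, hBpath, hlenTB, hTsub, hBsub, hTBint, hcover⟩ :=
            cycle_split C hC hwC hz₁C (Ne.symm hz₁w)
          rcases hcover u huC with huT | huB
          · -- u on arc T : w → z₁ ; use cycle w → v → z₁ → w via T.reverse
            refine ⟨w, Walk.cons h₁.symm (R'.append T.reverse), ?_, ?_, ?_⟩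
            · rw [Walk.cons_isCycle_iff]
              constructor
              · refine isPath_append hR'path hTpath.reverse ?_
                intro t htR htT
                rw [Walk.support_reverse, List.mem_reverse] at htT
                exact hR'first t htR (hTsub t htT)
              · intro hmem
                rw [Walk.edges_append, List.mem_append] at hmem
                rcases hmem with h | h
                · exact hwR' (R'.fst_mem_support_of_mem_edges h)
                · rw [Walk.edges_reverse, List.mem_reverse] at h
                  exact hvC (hTsub v (T.snd_mem_support_of_mem_edges h))
            · rw [Walk.support_cons]
              refine List.mem_cons_of_mem _ ?_
              rw [Walk.mem_support_append_iff]
              right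
              rw [Walk.support_reverse, List.mem_reverse]
              exact huT
            · rw [Walk.support_cons]
              exact List.mem_cons_of_mem _ (by
                rw [Walk.mem_support_append_iff]
                exact Or.inl (Walk.start_mem_support _))
          · -- u on arc B : z₁ → w
            refine ⟨w, Walk.cons h₁.symm (R'.append B), ?_, ?_, ?_⟩
            · rw [Walk.cons_isCycle_iff]
              constructor
              · refine isPath_append hR'path hBpath ?_
                intro t htR htB
                exact hR'first t htR (hBsub t htB)
              · intro hmem
                rw [Walk.edges_append, List.mem_append] at hmem
                rcases hmem with h | h
                · exact hwR' (R'.fst_mem_support_of_mem_edges h)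
                · exact hvC (hBsub v (B.snd_mem_support_of_mem_edges h))
            · rw [Walk.support_cons]
              refine List.mem_cons_of_mem _ ?_
              rw [Walk.mem_support_append_iff]
              exact Or.inr huB
            · rw [Walk.support_cons]
              exact List.mem_cons_of_mem _ (by
                rw [Walk.mem_support_append_iff]
                exact Or.inl (Walk.start_mem_support _))
lemma assemble {a₀ : V} (c₀ : G.Walk a₀ a₀) (hc₀ : c₀.IsCycle)
    (hodd : Odd c₀.length) {u v x y : V}
    (pu : G.Walk u x) (pv : G.Walk v y) (hpu : pu.IsPath) (hpv : pv.IsPath)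
    (hx : x ∈ c₀.support) (hy : y ∈ c₀.support)
    (hdisj : ∀ t : V, t ∈ pu.support → t ∈ pv.support → False) :
    (∃ p : G.Walk u v, p.IsPath ∧ Odd p.length) ∧
    (∃ p : G.Walk u v, p.IsPath ∧ Even p.length) := by
  classical
  obtain ⟨x₁, hx₁C, pu', hpu'path, hpu'sub, hpu'first⟩ :=
    exists_first_hit {t | t ∈ c₀.support} pu hx
  obtain ⟨y₁, hy₁C, pv', hpv'path, hpv'sub, hpv'first⟩ :=
    exists_first_hit {t | t ∈ c₀.support} pv hy
  have hx₁y₁ : x₁ ≠ y₁ := by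
    intro h
    refine hdisj x₁ (hpu'sub x₁ (Walk.end_mem_support _)) ?_
    rw [h]
    exact hpv'sub y₁ (Walk.end_mem_support _)
  obtain ⟨T, B, hTpath, hBpath, hlenTB, hTsub, hBsub, hTBint, hcover⟩ :=
    cycle_split c₀ hc₀ hx₁C hy₁C hx₁y₁
  have hdisj' : ∀ t : V, t ∈ pu'.support → t ∈ pv'.support → False :=
    fun t h1 h2 => hdisj t (hpu'sub t h1) (hpv'sub t h2)
  -- first path : pu' ++ T ++ pv'.reverse
  have hA1 : (pu'.append T).IsPath := by
    refine isPath_append hpu'path hTpath ?_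
    intro t ht1 ht2
    exact hpu'first t ht1 (hTsub t ht2)
  have hF1 : ((pu'.append T).append pv'.reverse).IsPath := by
    refine isPath_append hA1 hpv'path.reverse ?_
    intro t ht1 ht2
    rw [Walk.support_reverse, List.mem_reverse] at ht2
    rw [Walk.mem_support_append_iff] at ht1
    rcases ht1 with h | h
    · exact absurd ht2 (fun hh => hdisj' t h hh)
    · exact hpv'first t ht2 (hTsub t h)
  -- second path : pu' ++ B.reverse ++ pv'.reverse
  have hA2 : (pu'.append B.reverse).IsPath := by
    refine isPath_append hpu'path hBpath.reverse ?_
    intro t ht1 ht2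
    rw [Walk.support_reverse, List.mem_reverse] at ht2
    exact hpu'first t ht1 (hBsub t ht2)
  have hF2 : ((pu'.append B.reverse).append pv'.reverse).IsPath := by
    refine isPath_append hA2 hpv'path.reverse ?_
    intro t ht1 ht2
    rw [Walk.support_reverse, List.mem_reverse] at ht2
    rw [Walk.mem_support_append_iff] at ht1
    rcases ht1 with h | h
    · exact absurd ht2 (fun hh => hdisj' t h hh)
    · rw [Walk.support_reverse, List.mem_reverse] at h
      exact hpv'first t ht2 (hBsub t h)
  have hlen1 : ((pu'.append T).append pv'.reverse).length
      = pu'.length + T.length + pv'.length := by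
    rw [Walk.length_append, Walk.length_append, Walk.length_reverse]
  have hlen2 : ((pu'.append B.reverse).append pv'.reverse).length
      = pu'.length + B.length + pv'.length := by
    rw [Walk.length_append, Walk.length_append, Walk.length_reverse, Walk.length_reverse]
  have hoddc : c₀.length % 2 = 1 := Nat.odd_iff.mp hodd
  by_cases hpar : (pu'.length + T.length + pv'.length) % 2 = 1
  · constructor
    · exact ⟨(pu'.append T).append pv'.reverse, hF1, by
        rw [Nat.odd_iff, hlen1]; exact hpar⟩
    · exact ⟨(pu'.append B.reverse).append pv'.reverse, hF2, by
        rw [Nat.even_iff, hlen2]; omega⟩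
  · constructor
    · exact ⟨(pu'.append B.reverse).append pv'.reverse, hF2, by
        rw [Nat.odd_iff, hlen2]; omega⟩
    · exact ⟨(pu'.append T).append pv'.reverse, hF1, by
        rw [Nat.even_iff, hlen1]; omega⟩


end Walks

section Aug
variable {V : Type*}


def aug (H : SimpleGraph V) (u v : V) (S : Set V) :
    SimpleGraph (Option (Option V)) where
  Adj a b := match a, b with
    | some (some x), some (some y) => H.Adj x y
    | some (some x), some none => x = u ∨ x = v
    | some none, some (some y) => y = u ∨ y = v
    | some (some x), none => x ∈ S
    | none, some (some y) => y ∈ S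
    | _, _ => False
  symm := by
    constructor
    rintro (_ | (_ | x)) (_ | (_ | y)) h <;>
      first | exact h.symm | exact h | exact h.elim
  loopless := by
    constructor
    rintro (_ | (_ | x)) h <;> first | exact h | exact H.irrefl h

variable {H : SimpleGraph V} {u v : V} {S : Set V}

lemma aug_adj_emb {x y : V} : (aug H u v S).Adj (some (some x)) (some (some y)) ↔ H.Adj x y :=
  Iff.rfl

lemma adj_z {b : Option (Option V)} (h : (aug H u v S).Adj (some none) b) :
    ∃ c : V, b = some (some c) ∧ (c = u ∨ c = v) := by
  rcases b with _ | (_ | c)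
  · exact h.elim
  · exact h.elim
  · exact ⟨c, rfl, h⟩

lemma adj_z' {b : Option (Option V)} (h : (aug H u v S).Adj none b) :
    ∃ c : V, b = some (some c) ∧ c ∈ S := by
  rcases b with _ | (_ | c)
  · exact h.elim
  · exact h.elim
  · exact ⟨c, rfl, h⟩

lemma z_ne_z' : (some none : Option (Option V)) ≠ none := by simp

lemma not_adj_zz' : ¬ (aug H u v S).Adj (some none) none := fun h => h

def augHom (H : SimpleGraph V) (u v : V) (S : Set V) : H →g (aug H u v S) :=
  ⟨fun x => some (some x), fun {a b} h => h⟩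

lemma augHom_apply (x : V) : (augHom H u v S) x = some (some x) := rfl

lemma down : ∀ {s t : Option (Option V)} (p : (aug H u v S).Walk s t),
    (∀ x ∈ p.support, ∃ y : V, x = some (some y)) →
    ∃ (a b : V) (q : H.Walk a b), s = some (some a) ∧ t = some (some b) ∧
      q.length = p.length ∧ q.support.map (fun x => some (some x)) = p.support := by
  intro s t p
  induction p with
  | nil =>
    intro hp
    obtain ⟨a, ha⟩ := hp _ (Walk.start_mem_support _)
    exact ⟨a, a, Walk.nil, ha, ha, rfl, by rw [ha]; simp⟩
  | @cons s m t h p' ih =>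
    intro hp
    obtain ⟨a, ha⟩ := hp s (Walk.start_mem_support _)
    obtain ⟨a₂, b, q', hm, ht, hlen, hsup⟩ := ih (fun x hx => hp x (by
      rw [Walk.support_cons]; exact List.mem_cons_of_mem _ hx))
    have hadj : H.Adj a a₂ := by
      rw [ha, hm] at h
      exact h
    refine ⟨a, b, Walk.cons hadj q', ha, ht, ?_, ?_⟩
    · rw [Walk.length_cons, Walk.length_cons, hlen]
    · rw [Walk.support_cons, Walk.support_cons, List.map_cons, hsup, ha]

lemma peel (P : (aug H u v S).Walk (some none) none) (hP : P.IsPath) :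
    ∃ (a b : V) (q : H.Walk a b), (a = u ∨ a = v) ∧ b ∈ S ∧ q.IsPath ∧
      (∀ t ∈ q.support, some (some t) ∈ P.support) := by
  rcases P with _ | ⟨h1, P1⟩
  rename_i m
  -- h1 : Adj z m ; P1 : m → none
  obtain ⟨c, hm, hcuv⟩ := adj_z h1
  have hP1 : P1.IsPath := hP.of_cons
  have hznP1 : (some none : Option (Option V)) ∉ P1.support := by
    have := hP.support_nodup
    rw [Walk.support_cons, List.nodup_cons] at this
    exact this.1
  rcases hrev : P1.reverse with _ | ⟨h2, P2⟩
  · exact absurd hm (by simp)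
  · rename_i m₂
    obtain ⟨c₂, hm₂, hc₂S⟩ := adj_z' h2
    set M := P2.reverse with hM
    have hMsup : P1.support = M.support ++ [none] := by
      have h1' : P1.support = P1.reverse.support.reverse := by
        rw [Walk.support_reverse, List.reverse_reverse]
      rw [h1', hrev, Walk.support_cons, List.reverse_cons, hM, Walk.support_reverse]
    have hP2path : P2.IsPath := by
      have := hP1.reverse
      rw [hrev] at this
      exact this.of_cons
    have hMpath : M.IsPath := hP2path.reverse
    have hnoneM : (none : Option (Option V)) ∉ M.support := by
      intro hmem
      have := hP1.support_nodup
      rw [hMsup] at this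
      rw [List.nodup_append] at this
      exact this.2.2 _ hmem _ (List.mem_singleton_self _) rfl
    have hall : ∀ x ∈ M.support, ∃ y : V, x = some (some y) := by
      intro x hx
      rcases x with _ | (_ | y)
      · exact absurd hx hnoneM
      · exact absurd (by
          rw [hMsup] at hznP1
          rw [List.mem_append] at hznP1
          push_neg at hznP1
          exact hznP1.1 : (some none : Option (Option V)) ∉ M.support) (fun h => h hx)
      · exact ⟨y, rfl⟩
    obtain ⟨a, b, q, hsa, htb, hqlen, hqsup⟩ := down M hall
    have hac : a = c := by
      have := hsa.symm.trans hm
      simpa using this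
    have hbc₂ : b = c₂ := by
      have := htb.symm.trans hm₂
      simpa using this
    subst hac
    subst hbc₂
    refine ⟨a, b, q, hcuv, hc₂S, ?_, ?_⟩
    · rw [Walk.isPath_def]
      have hnod := hMpath.support_nodup
      rw [← hqsup] at hnod
      exact hnod.of_map
    · intro t ht
      have h1' : some (some t) ∈ M.support := by
        rw [← hqsup]
        exact List.mem_map_of_mem ht
      rw [Walk.support_cons]
      refine List.mem_cons_of_mem _ ?_
      rw [hMsup, List.mem_append]
      exact Or.inl h1'


lemma adj_z_mk {c : V} (h : c = u ∨ c = v) :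
    (aug H u v S).Adj (some none) (some (some c)) := h

lemma adj_z'_mk {c : V} (h : c ∈ S) :
    (aug H u v S).Adj none (some (some c)) := h

lemma emb_not_mem_map {w₀ x y : V} (p : H.Walk x y) (hw : w₀ ∉ p.support) :
    (some (some w₀) : Option (Option V)) ∉ (p.map (augHom H u v S)).support := by
  intro hmem
  rw [Walk.support_map, List.mem_map] at hmem
  obtain ⟨s, hsmem, hs⟩ := hmem
  have hss : (some (some s) : Option (Option V)) = some (some w₀) := hs
  have hsw : s = w₀ := by simpa using hss
  exact hw (hsw ▸ hsmem)

lemma z_not_mem_map {x y : V} (p : H.Walk x y) :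
    (some none : Option (Option V)) ∉ (p.map (augHom H u v S)).support := by
  intro hmem
  rw [Walk.support_map, List.mem_map] at hmem
  obtain ⟨s, _, hs⟩ := hmem
  have hss : (some (some s) : Option (Option V)) = some none := hs
  simp at hss

lemma z'_not_mem_map {x y : V} (p : H.Walk x y) :
    (none : Option (Option V)) ∉ (p.map (augHom H u v S)).support := by
  intro hmem
  rw [Walk.support_map, List.mem_map] at hmem
  obtain ⟨s, _, hs⟩ := hmem
  have hss : (some (some s) : Option (Option V)) = none := hs
  simp at hss

end Aug

end CriticalAux

/-- In a vertex-critical `d`-chromatic graph with `d ≥ 3`, any two distinct vertices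
are joined by a path of odd length and by a path of even length. -/
theorem critical_odd_even_paths {V : Type*} [Fintype V] (H : SimpleGraph V)
    (d : ℕ) (hd : 3 ≤ d) (hχ : H.chromaticNumber = (d : ℕ∞))
    (hcrit : ∀ v : V, (H.induce {w | w ≠ v}).chromaticNumber < (d : ℕ∞))
    (u v : V) (huv : u ≠ v) :
    (∃ p : H.Walk u v, p.IsPath ∧ Odd p.length) ∧
    (∃ p : H.Walk u v, p.IsPath ∧ Even p.length) := by
  classical
  open CriticalAux in
  -- basic coloring facts
  have hncol : ¬ H.Colorable (d - 1) := by
    intro hc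
    have h1 := SimpleGraph.chromaticNumber_le_iff_colorable.mpr hc
    rw [hχ] at h1
    have : d ≤ d - 1 := by exact_mod_cast h1
    omega
  have hcol : ∀ w : V, (H.induce {x | x ≠ w}).Colorable (d - 1) := by
    intro w
    have h2 := hcrit w
    have hst : ((d - 1 : ℕ) : ℕ∞) + 1 = (d : ℕ∞) := by
      have hh : d - 1 + 1 = d := by omega
      exact_mod_cast congrArg (Nat.cast : ℕ → ℕ∞) hh
    have h3 : (H.induce {x | x ≠ w}).chromaticNumber ≤ ((d - 1 : ℕ) : ℕ∞) :=
      (ENat.lt_add_one_iff (by simp)).mp (by rw [hst]; exact h2)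
    exact SimpleGraph.chromaticNumber_le_iff_colorable.mp h3
  have hcolfun : ∀ w : V, ∃ f : V → Fin (d - 1), PC H (d - 1) {x | x ≠ w} f := by
    intro w
    obtain ⟨C⟩ := hcol w
    refine ⟨fun z => if h : z ≠ w then C ⟨z, h⟩ else ⟨0, by omega⟩, ?_⟩
    intro x y hx hy hadj
    have hx' : x ≠ w := hx
    have hy' : y ≠ w := hy
    simp only [dif_pos hx', dif_pos hy']
    exact C.valid (by exact hadj)
  have havoidH : ∀ w x y : V, x ≠ w → y ≠ w → ∃ p : H.Walk x y, w ∉ p.support :=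
    reach_del H hcolfun hncol
  have hcard : d ≤ Fintype.card V := by
    by_contra hlt
    push_neg at hlt
    exact hncol ((H.colorable_of_fintype).mono (by omega))
  have hbig : ∀ a b : V, ∃ c : V, c ≠ a ∧ c ≠ b := by
    intro a b
    by_contra h
    push_neg at h
    have hsub : (Finset.univ : Finset V) ⊆ {a, b} := by
      intro c _
      rcases eq_or_ne c a with rfl | hca
      · simp
      · simp [h c hca]
    have h2 := Finset.card_le_card hsub
    rw [Finset.card_univ] at h2
    have h3 : ({a, b} : Finset V).card ≤ 2 := by
      apply le_trans (Finset.card_insert_le _ _)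
      simp
    omega
  have hwalkH : ∀ a b : V, Nonempty (H.Walk a b) := by
    intro a b
    rcases eq_or_ne a b with rfl | hab
    · exact ⟨Walk.nil⟩
    · obtain ⟨c, hca, hcb⟩ := hbig a b
      obtain ⟨p, -⟩ := havoidH c a b hca.symm hcb.symm
      exact ⟨p⟩
  have hn2 : ¬ H.Colorable 2 := fun h => hncol (h.mono (by omega))
  have hne : Nonempty V := Fintype.card_pos_iff.mp (by omega)
  obtain ⟨r⟩ := hne
  obtain ⟨a₀, c₀, hc₀, hoddc₀⟩ := exists_odd_cycle H hwalkH hn2 r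
  have two_nbrsH := two_nbrs H hwalkH havoidH hbig
  obtain ⟨p₀, q₀, hp₀q₀, hp₀, hq₀⟩ := cycle_two_vertices c₀ hc₀
  -- the augmented graph
  set Sset : Set V := {t : V | t ∈ c₀.support} with hSset
  set G2 := aug H u v Sset with hG2
  have hp₀S : (aug H u v Sset).Adj none (some (some p₀)) := adj_z'_mk hp₀
  have hq₀S : (aug H u v Sset).Adj none (some (some q₀)) := adj_z'_mk hq₀
  -- reachability in G2
  have hub : ∀ a : Option (Option V), (aug H u v Sset).Reachable a (some (some u)) := by
    rintro (_ | (_ | x))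
    · exact Reachable.trans ⟨Walk.cons hp₀S Walk.nil⟩
        ⟨((hwalkH p₀ u).some).map (augHom H u v Sset)⟩
    · exact ⟨Walk.cons (adj_z_mk (Or.inl rfl)) Walk.nil⟩
    · exact ⟨((hwalkH x u).some).map (augHom H u v Sset)⟩
  have hreach2 : ∀ a b : Option (Option V), (aug H u v Sset).Reachable a b :=
    fun a b => (hub a).trans (hub b).symm
  -- vertex-deleted connectivity in G2
  have havoid2 : ∀ w a b : Option (Option V), a ≠ w → b ≠ w →
      ∃ p : (aug H u v Sset).Walk a b, w ∉ p.support := by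
    have key : ∀ w : Option (Option V), ∃ t : Option (Option V), t ≠ w ∧
        ∀ a, a ≠ w → ∃ p : (aug H u v Sset).Walk a t, w ∉ p.support := by
      rintro (_ | (_ | w₀))
      · -- w = z'
        refine ⟨some (some u), by simp, ?_⟩
        rintro (_ | (_ | x)) ha
        · exact absurd rfl ha
        · refine ⟨Walk.cons (adj_z_mk (Or.inl rfl)) Walk.nil, ?_⟩
          intro hmem
          rw [Walk.support_cons, Walk.support_nil] at hmem
          simp at hmem
        · exact ⟨((hwalkH x u).some).map (augHom H u v Sset), z'_not_mem_map _⟩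
      · -- w = z
        refine ⟨some (some u), by simp, ?_⟩
        rintro (_ | (_ | x)) ha
        · refine ⟨Walk.cons hp₀S (((hwalkH p₀ u).some).map (augHom H u v Sset)), ?_⟩
          intro hmem
          change _ ∈ _ :: _ at hmem
          rw [List.mem_cons] at hmem
          rcases hmem with h | h
          · simp at h
          · exact z_not_mem_map _ h
        · exact absurd rfl ha
        · exact ⟨((hwalkH x u).some).map (augHom H u v Sset), z_not_mem_map _⟩
      · -- w = some (some w₀)
        have hu₀ : ∃ u₀ : V, (u₀ = u ∨ u₀ = v) ∧ u₀ ≠ w₀ := by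
          by_cases h : u = w₀
          · refine ⟨v, Or.inr rfl, ?_⟩
            intro hv
            exact huv (by rw [h, hv])
          · exact ⟨u, Or.inl rfl, h⟩
        obtain ⟨u₀, hu₀uv, hu₀w₀⟩ := hu₀
        refine ⟨some (some u₀), by simp [hu₀w₀], ?_⟩
        rintro (_ | (_ | x)) ha
        · -- a = z' : go through a cycle vertex ≠ w₀
          have hcs : ∃ cs : V, cs ∈ c₀.support ∧ cs ≠ w₀ := by
            by_cases h : p₀ = w₀
            · exact ⟨q₀, hq₀, fun hq => hp₀q₀ (by rw [h, hq])⟩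
            · exact ⟨p₀, hp₀, h⟩
          obtain ⟨cs, hcsS, hcsw₀⟩ := hcs
          obtain ⟨pw, hpw⟩ := havoidH w₀ cs u₀ hcsw₀ hu₀w₀
          refine ⟨Walk.cons (adj_z'_mk hcsS) (pw.map (augHom H u v Sset)), ?_⟩
          intro hmem
          change _ ∈ _ :: _ at hmem
          rw [List.mem_cons] at hmem
          rcases hmem with h | h
          · simp at h
          · exact emb_not_mem_map pw hpw h
        · -- a = z
          refine ⟨Walk.cons (adj_z_mk hu₀uv) Walk.nil, ?_⟩
          intro hmem
          rw [Walk.support_cons, Walk.support_nil] at hmem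
          simp only [List.mem_cons, List.mem_singleton] at hmem
          rcases hmem with h | h
          · simp at h
          · simp at h
            exact hu₀w₀ h.symm
        · -- a = some (some x), x ≠ w₀
          have hxw₀ : x ≠ w₀ := by
            intro h
            exact ha (by rw [h])
          obtain ⟨pw, hpw⟩ := havoidH w₀ x u₀ hxw₀ hu₀w₀
          exact ⟨pw.map (augHom H u v Sset), emb_not_mem_map pw hpw⟩
    intro w a b ha hb
    obtain ⟨t, -, hkey⟩ := key w
    obtain ⟨pa, hpa⟩ := hkey a ha
    obtain ⟨pb, hpb⟩ := hkey b hb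
    refine ⟨pa.append pb.reverse, ?_⟩
    intro hmem
    rw [Walk.mem_support_append_iff] at hmem
    rcases hmem with h | h
    · exact hpa h
    · rw [Walk.support_reverse, List.mem_reverse] at h
      exact hpb h
  -- degrees in G2
  have hdeg2 : ∀ a : Option (Option V), ∃ y z : Option (Option V),
      y ≠ z ∧ (aug H u v Sset).Adj a y ∧ (aug H u v Sset).Adj a z := by
    rintro (_ | (_ | x))
    · exact ⟨some (some p₀), some (some q₀), by simp [hp₀q₀], hp₀S, hq₀S⟩
    · exact ⟨some (some u), some (some v), by simp [huv], adj_z_mk (Or.inl rfl),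
        adj_z_mk (Or.inr rfl)⟩
    · obtain ⟨n₁, n₂, hn, h1, h2⟩ := two_nbrsH x
      exact ⟨some (some n₁), some (some n₂), by simp [hn], h1, h2⟩
  -- Whitney: a cycle through z and z'
  obtain ⟨A, K, hK, hzK, hz'K⟩ :=
    whitney (G := aug H u v Sset) hreach2 havoid2 hdeg2 (some none) none z_ne_z'
  obtain ⟨T, B, hTpath, hBpath, -, hTsub, hBsub, hTBint, -⟩ :=
    cycle_split K hK hzK hz'K z_ne_z'
  -- peel both paths down to H
  obtain ⟨a₁, b₁, q₁, ha₁, hb₁S, hq₁path, hq₁sup⟩ := peel T hTpath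
  obtain ⟨a₂, b₂, q₂, ha₂, hb₂S, hq₂path, hq₂sup⟩ := peel B.reverse hBpath.reverse
  have hq₂sup' : ∀ t ∈ q₂.support, some (some t) ∈ B.support := by
    intro t ht
    have := hq₂sup t ht
    rwa [Walk.support_reverse, List.mem_reverse] at this
  have hdisjq : ∀ t : V, t ∈ q₁.support → t ∈ q₂.support → False := by
    intro t h1 h2
    have h3 := hTBint _ (hq₁sup t h1) (hq₂sup' t h2)
    rcases h3 with h | h
    · exact absurd h (by simp)
    · exact absurd h (by simp)
  have hane : a₁ ≠ a₂ := by
    intro h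
    refine hdisjq a₁ (Walk.start_mem_support _) ?_
    rw [h]
    exact Walk.start_mem_support _
  rcases ha₁ with h1 | h1 <;> rcases ha₂ with h2 | h2
  · exact absurd (h1.trans h2.symm) hane
  · subst h1; subst h2
    exact assemble c₀ hc₀ hoddc₀ q₁ q₂ hq₁path hq₂path hb₁S hb₂S hdisjq
  · subst h1; subst h2
    exact assemble c₀ hc₀ hoddc₀ q₂ q₁ hq₂path hq₁path hb₂S hb₁S
      (fun t ht2 ht1 => hdisjq t ht1 ht2)
  · exact absurd (h1.trans h2.symm) hane
end

section
/- Let a > 0 and 1/2 < b < 1 be real numbers, and let H be a graph such that every H-free graph on n vertices has at most a·n^{2b} edges, for every n. Then for any H-free graph G of minimum degree at least 18·a·d (d > 0 real) and any set X of vertices of G with |X| ≤ d^{1/(2b-1)}, the open neighborhood satisfies |∂X| > 2|X|. -/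
/-- `G` contains no subgraph isomorphic to `H`. -/
def HFree {W V : Type*} (H : SimpleGraph W) (G : SimpleGraph V) : Prop :=
  ¬∃ f : H →g G, Function.Injective f

/-- If every `H`-free graph on `n` vertices has at most `a·n^{2b}` edges, then every
`H`-free graph of minimum degree at least `18·a·d` expands: every nonempty vertex set
`X` with `|X| ≤ d^{1/(2b-1)}` satisfies `|∂X| > 2|X|`. -/
theorem HFree_expansion {W : Type*} [Fintype W] (H : SimpleGraph W)
    (a b : ℝ) (ha : 0 < a) (hb1 : 1 / 2 < b) (hb2 : b < 1)
    (hTuran : ∀ (n : ℕ) (F : SimpleGraph (Fin n)), HFree H F →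
      (F.edgeSet.ncard : ℝ) ≤ a * (n : ℝ) ^ (2 * b))
    {V : Type*} [Fintype V] [DecidableEq V] [Nonempty V]
    (G : SimpleGraph V) [DecidableRel G.Adj] (hGfree : HFree H G)
    (d : ℝ) (hd : 0 < d) (hmin : 18 * a * d ≤ (G.minDegree : ℝ))
    (X : Finset V) (hX : X.Nonempty)
    (hXcard : (X.card : ℝ) ≤ d ^ (1 / (2 * b - 1))) :
    2 * X.card < (Finset.univ.filter fun y => y ∉ X ∧ ∃ x ∈ X, G.Adj x y).card := by
  classical
  by_contra hcon
  push_neg at hcon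
  set N := Finset.univ.filter (fun y => y ∉ X ∧ ∃ x ∈ X, G.Adj x y) with hNdef
  set S := X ∪ N with hSdef
  have hXS : X ⊆ S := Finset.subset_union_left
  have hnbr : ∀ x ∈ X, ∀ v, G.Adj x v → v ∈ S := by
    intro x hx v hadj
    by_cases hv : v ∈ X
    · exact hXS hv
    · refine Finset.mem_union_right _ ?_
      simp only [hNdef, Finset.mem_filter, Finset.mem_univ, true_and]
      exact ⟨hv, x, hx, hadj⟩
  set n := S.card with hn
  let e : ↥S ≃ Fin n := Fintype.equivFinOfCardEq (by rw [Fintype.card_coe])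
  let F : SimpleGraph (Fin n) := G.comap (fun i => ((e.symm i : ↥S) : V))
  have hFfree : HFree H F := by
    rintro ⟨f, hf⟩
    refine hGfree ⟨⟨fun w => ((e.symm (f w) : ↥S) : V), fun huv => f.map_rel' huv⟩, ?_⟩
    intro u v huv
    exact hf (e.symm.injective (Subtype.coe_injective huv))
  have hdeg : ∀ (s : ↥S), (s : V) ∈ X → F.degree (e s) = G.degree (s : V) := by
    intro s hsX
    unfold SimpleGraph.degree
    refine Finset.card_bij' (fun j _ => ((e.symm j : ↥S) : V))
      (fun v hv => e ⟨v, hnbr _ hsX v (by simpa using hv)⟩) ?_ ?_ ?_ ?_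
    · intro j hj
      rw [SimpleGraph.mem_neighborFinset] at hj ⊢
      have : G.Adj ((e.symm (e s) : ↥S) : V) ((e.symm j : ↥S) : V) := hj
      simpa using this
    · intro v hv
      rw [SimpleGraph.mem_neighborFinset] at hv ⊢
      show G.Adj ((e.symm (e s) : ↥S) : V) _
      simpa using hv
    · intro j hj; simp
    · intro v hv; simp
  have hsum1 : ∑ x ∈ X, G.degree x ≤ ∑ i : Fin n, F.degree i := by
    have h1 : ∑ x ∈ X, G.degree x
        = ∑ p ∈ X.attach, F.degree (e ⟨p.1, hXS p.2⟩) := by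
      rw [← Finset.sum_attach X (fun x => G.degree x)]
      exact Finset.sum_congr rfl fun p _ => (hdeg ⟨p.1, hXS p.2⟩ p.2).symm
    have h2 : ∑ p ∈ X.attach, F.degree (e ⟨p.1, hXS p.2⟩)
        = ∑ i ∈ X.attach.image (fun p => e ⟨p.1, hXS p.2⟩), F.degree i := by
      rw [Finset.sum_image]
      intro p _ q _ h
      have h2 := congrArg Subtype.val (e.injective h)
      exact Subtype.ext h2
    rw [h1, h2]
    exact Finset.sum_le_sum_of_subset (Finset.subset_univ _)
  have hsum2 : X.card * G.minDegree ≤ ∑ x ∈ X, G.degree x := by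
    calc X.card * G.minDegree = ∑ _x ∈ X, G.minDegree := by
          rw [Finset.sum_const, smul_eq_mul]
      _ ≤ ∑ x ∈ X, G.degree x :=
          Finset.sum_le_sum fun x _ => G.minDegree_le_degree x
  have handshake : ∑ i : Fin n, F.degree i = 2 * F.edgeFinset.card :=
    F.sum_degrees_eq_twice_card_edges
  have hedge : (F.edgeSet.ncard : ℝ) = (F.edgeFinset.card : ℝ) := by
    rw [← SimpleGraph.coe_edgeFinset, Set.ncard_coe_finset]
  have hT := hTuran n F hFfree
  have hnat : X.card * G.minDegree ≤ 2 * F.edgeFinset.card :=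
    hsum2.trans (hsum1.trans (le_of_eq handshake))
  -- pass to reals
  set x : ℝ := (X.card : ℝ) with hxdef
  have hx1 : (1 : ℝ) ≤ x := by
    have h := Finset.card_pos.mpr hX
    rw [hxdef]; exact_mod_cast h
  have hx0 : (0 : ℝ) < x := lt_of_lt_of_le one_pos hx1
  have hreal1 : x * (18 * a * d) ≤ 2 * (a * (n : ℝ) ^ (2 * b)) := by
    have h1 : x * (18 * a * d) ≤ x * (G.minDegree : ℝ) :=
      mul_le_mul_of_nonneg_left hmin hx0.le
    have h2 : x * (G.minDegree : ℝ) ≤ 2 * (F.edgeFinset.card : ℝ) := by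
      rw [hxdef]; exact_mod_cast hnat
    have h3 : (2 : ℝ) * (F.edgeFinset.card : ℝ) ≤ 2 * (a * (n : ℝ) ^ (2 * b)) := by
      rw [← hedge]; linarith
    linarith
  have hn3 : (n : ℝ) ≤ 3 * x := by
    have h1 : S.card ≤ X.card + N.card := Finset.card_union_le _ _
    have h2 : S.card ≤ 3 * X.card := by omega
    calc (n : ℝ) ≤ ((3 * X.card : ℕ) : ℝ) := by exact_mod_cast h2
      _ = 3 * x := by push_cast; ring
  have hb' : (0 : ℝ) < 2 * b - 1 := by linarith
  have hxd : x ^ (2 * b - 1) ≤ d := by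
    have h := Real.rpow_le_rpow hx0.le hXcard hb'.le
    rwa [← Real.rpow_mul hd.le, one_div_mul_cancel (ne_of_gt hb'), Real.rpow_one] at h
  have h32 : (3 : ℝ) ^ (2 * b - 2) < 1 :=
    Real.rpow_lt_one_of_one_lt_of_neg (by norm_num) (by linarith)
  have h32pos : (0 : ℝ) < (3 : ℝ) ^ (2 * b - 2) := Real.rpow_pos_of_pos (by norm_num) _
  have hnpow : ((n : ℝ)) ^ (2 * b) ≤ (3 * x) ^ (2 * b) :=
    Real.rpow_le_rpow (Nat.cast_nonneg n) hn3 (by linarith)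
  have e1 : (3 * x) ^ (2 * b) = 9 * (3 : ℝ) ^ (2 * b - 2) * (x ^ (2 * b - 1) * x) := by
    rw [Real.mul_rpow (by norm_num) hx0.le]
    have h3 : (3 : ℝ) ^ (2 * b) = 9 * (3 : ℝ) ^ (2 * b - 2) := by
      rw [show 2 * b = 2 + (2 * b - 2) by ring, Real.rpow_add (by norm_num : (0:ℝ) < 3)]
      norm_num
    have hx : x ^ (2 * b) = x ^ (2 * b - 1) * x := by
      rw [show 2 * b = (2 * b - 1) + 1 by ring, Real.rpow_add hx0, Real.rpow_one]
      norm_num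
    rw [h3, hx]
  have hkey : (3 : ℝ) ^ (2 * b - 2) * x ^ (2 * b - 1) < d := by
    calc (3 : ℝ) ^ (2 * b - 2) * x ^ (2 * b - 1) ≤ (3 : ℝ) ^ (2 * b - 2) * d :=
          mul_le_mul_of_nonneg_left hxd h32pos.le
      _ < 1 * d := by
          exact mul_lt_mul_of_pos_right h32 hd
      _ = d := one_mul d
  have hfin : 2 * (a * (3 * x) ^ (2 * b)) < x * (18 * a * d) := by
    rw [e1]
    have hxp : (0 : ℝ) < x ^ (2 * b - 1) := Real.rpow_pos_of_pos hx0 _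
    nlinarith [mul_pos ha hx0, mul_pos h32pos hxp]
  have : x * (18 * a * d) < x * (18 * a * d) :=
    lt_of_le_of_lt (hreal1.trans (by nlinarith)) hfin
  exact lt_irrefl _ this
end

section
/- Let G be a connected finite simple graph of average degree at least 2c, and let L_0, L_1, L_2, … be the distance levels from a fixed vertex (L_i is the set of vertices at distance exactly i). Then there exists an index i such that the subgraph of G induced by L_i ∪ L_{i+1} has average degree at least c, provided G is bipartite (so no edges lie within any single level L_i). -/
open SimpleGraph Finset

lemma adj_dist_level {V : Type*} (G : SimpleGraph V) (hconn : G.Connected)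
    (hbip : G.Colorable 2) (r u v : V) (huv : G.Adj u v) :
    G.dist r v = G.dist r u + 1 ∨ G.dist r u = G.dist r v + 1 := by
  classical
  obtain ⟨col⟩ : Nonempty (G.Coloring Bool) := ⟨G.recolorOfEquiv finTwoEquiv hbip.some⟩
  obtain ⟨p, hp⟩ := (hconn r u).exists_walk_length_eq_dist
  obtain ⟨q, hq⟩ := (hconn r v).exists_walk_length_eq_dist
  have h1 : Even (G.dist r u + 1) ↔ (col r ↔ col v) := by
    have := col.even_length_iff_congr (p.concat huv)
    rwa [SimpleGraph.Walk.length_concat, hp] at this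
  have h2 : Even (G.dist r v) ↔ (col r ↔ col v) := by
    have := col.even_length_iff_congr q
    rwa [hq] at this
  have hne : G.dist r u ≠ G.dist r v := by
    intro h
    rw [h, Nat.even_add_one] at h1
    tauto
  have hle1 : G.dist r v ≤ G.dist r u + 1 := by
    have := G.dist_le (p.concat huv)
    rwa [SimpleGraph.Walk.length_concat, hp] at this
  have hle2 : G.dist r u ≤ G.dist r v + 1 := by
    have := G.dist_le (q.concat huv.symm)
    rwa [SimpleGraph.Walk.length_concat, hq] at this
  omega

/-- level of an edge: the min distance from `r` of its endpoints. -/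
noncomputable def elev {V : Type*} (G : SimpleGraph V) (r : V) : Sym2 V → ℕ :=
  Sym2.lift ⟨fun u v => min (G.dist r u) (G.dist r v), fun u v => by simp [min_comm]⟩

lemma elev_mk {V : Type*} (G : SimpleGraph V) (r u v : V) :
    elev G r s(u, v) = min (G.dist r u) (G.dist r v) := rfl

lemma induce_edge_count {V : Type*} (G : SimpleGraph V) (hconn : G.Connected)
    (hbip : G.Colorable 2) (r : V) (i : ℕ) :
    (G.induce ({v | G.dist r v = i} ∪ {v | G.dist r v = i + 1})).edgeSet.ncard
      = {e | e ∈ G.edgeSet ∧ elev G r e = i}.ncard := by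
  classical
  set S : Set V := {v | G.dist r v = i} ∪ {v | G.dist r v = i + 1} with hS
  have hmem : ∀ v : V, v ∈ S ↔ (G.dist r v = i ∨ G.dist r v = i + 1) := by
    intro v; simp [hS]
  have himg : Sym2.map (Subtype.val : S → V) '' (G.induce S).edgeSet
      = {e | e ∈ G.edgeSet ∧ elev G r e = i} := by
    apply Set.ext
    intro e
    induction e using Sym2.ind with
    | _ u v =>
      constructor
      · rintro ⟨e', he', hme⟩
        revert he' hme
        induction e' using Sym2.ind with
        | _ a b =>
          intro he' hme
          rw [Sym2.map_pair_eq, Sym2.eq_iff] at hme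
          have hadj : G.Adj a.val b.val := he'
          have hd := adj_dist_level G hconn hbip r a.val b.val hadj
          have ha := (hmem a.val).mp a.property
          have hb := (hmem b.val).mp b.property
          have hlev : elev G r s(a.val, b.val) = i := by
            rw [elev_mk]; omega
          rcases hme with ⟨h1, h2⟩ | ⟨h1, h2⟩
          · exact ⟨by rw [SimpleGraph.mem_edgeSet, ← h1, ← h2]; exact hadj,
              by rw [← h1, ← h2]; exact hlev⟩
          · refine ⟨by rw [SimpleGraph.mem_edgeSet, ← h1, ← h2]; exact hadj.symm, ?_⟩
            rw [← h1, ← h2, elev_mk, min_comm]; rw [elev_mk] at hlev; exact hlev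
      · rintro ⟨hadj, hlev⟩
        rw [SimpleGraph.mem_edgeSet] at hadj
        rw [elev_mk] at hlev
        have hd := adj_dist_level G hconn hbip r u v hadj
        have hu : u ∈ S := (hmem u).mpr (by omega)
        have hv : v ∈ S := (hmem v).mpr (by omega)
        exact ⟨s(⟨u, hu⟩, ⟨v, hv⟩), hadj, by rw [Sym2.map_pair_eq]⟩
  rw [← himg, Set.ncard_image_of_injective _ (Sym2.map.injective Subtype.val_injective)]

/-- In a connected bipartite graph of average degree at least `2c`, some pair of
consecutive distance levels from a fixed vertex induces a (nonempty) subgraph of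
average degree at least `c`. -/
theorem consecutive_levels_dense {V : Type*} [Fintype V] (G : SimpleGraph V)
    (hconn : G.Connected) (hbip : G.Colorable 2) (c : ℝ) (r : V)
    (hdeg : 2 * c * (Fintype.card V : ℝ) ≤ 2 * (G.edgeSet.ncard : ℝ)) :
    ∃ i : ℕ,
      ({v | G.dist r v = i} ∪ {v | G.dist r v = i + 1} : Set V).Nonempty ∧
      c * ((({v | G.dist r v = i} ∪ {v | G.dist r v = i + 1} : Set V)).ncard : ℝ) ≤
        2 * ((G.induce ({v | G.dist r v = i} ∪ {v | G.dist r v = i + 1})).edgeSet.ncard : ℝ) := by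
  classical
  have hr0 : G.dist r r = 0 := G.dist_self
  have hr0' : r ∈ ({v | G.dist r v = 0} ∪ {v | G.dist r v = 0 + 1} : Set V) := by
    left; exact hr0
  by_cases hc : c ≤ 0
  · refine ⟨0, ⟨r, hr0'⟩, ?_⟩
    have h1 : c * (_ : ℝ) ≤ 0 := mul_nonpos_of_nonpos_of_nonneg hc
      (Nat.cast_nonneg (({v | G.dist r v = 0} ∪ {v | G.dist r v = 0 + 1} : Set V)).ncard)
    have h2 : (0:ℝ) ≤ 2 * ((G.induce ({v | G.dist r v = 0} ∪ {v | G.dist r v = 0 + 1})).edgeSet.ncard : ℝ) := by positivity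
    linarith
  push_neg at hc
  by_contra hcon
  push_neg at hcon
  set N : ℕ := (Finset.univ.sup fun v => G.dist r v) + 1 with hNdef
  have hN : ∀ v : V, G.dist r v < N := fun v =>
    Nat.lt_succ_of_le (Finset.le_sup (Finset.mem_univ v))
  set n : ℕ → ℕ := fun i => (Finset.univ.filter fun v => G.dist r v = i).card with hn
  set E : ℕ → ℕ := fun i => (G.edgeFinset.filter fun e => elev G r e = i).card with hE
  -- sum of level sizes
  have hsum_n : ∀ M : ℕ, N ≤ M → ∑ i ∈ Finset.range M, n i = Fintype.card V := by
    intro M hM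
    rw [← Finset.card_univ]
    exact (Finset.card_eq_sum_card_fiberwise
      (fun v _ => Finset.mem_range.mpr (lt_of_lt_of_le (hN v) hM))).symm
  have helevlt : ∀ e ∈ G.edgeFinset, elev G r e < N := by
    intro e he
    induction e using Sym2.ind with
    | _ u v => exact lt_of_le_of_lt (min_le_left _ _) (hN u)
  have hsum_E : ∑ i ∈ Finset.range N, E i = G.edgeFinset.card :=
    (Finset.card_eq_sum_card_fiberwise
      (fun e he => Finset.mem_range.mpr (helevlt e he))).symm
  have hsum_n1 : ∑ i ∈ Finset.range N, n (i + 1) ≤ Fintype.card V := by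
    have h1 : ∑ i ∈ Finset.range N, n (i + 1)
        = ∑ j ∈ (Finset.range N).image (· + 1), n j := by
      rw [Finset.sum_image (by intro x _ y _ h; simp only at h; omega)]
    have h2 : (Finset.range N).image (· + 1) ⊆ Finset.range (N + 1) := by
      intro j hj
      simp only [Finset.mem_image, Finset.mem_range] at hj ⊢
      omega
    calc ∑ i ∈ Finset.range N, n (i + 1)
        = ∑ j ∈ (Finset.range N).image (· + 1), n j := h1
      _ ≤ ∑ j ∈ Finset.range (N + 1), n j :=
          Finset.sum_le_sum_of_subset h2
      _ = Fintype.card V := hsum_n _ (Nat.le_succ N)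
  -- set-level cardinalities
  have hncard_level : ∀ i : ℕ, ({v | G.dist r v = i} : Set V).ncard = n i := by
    intro i
    have : ({v | G.dist r v = i} : Set V) = ↑(Finset.univ.filter fun v => G.dist r v = i) := by
      ext v; simp
    rw [this, Set.ncard_coe_finset]
  have hncard_union : ∀ i : ℕ,
      (({v | G.dist r v = i} ∪ {v | G.dist r v = i + 1} : Set V)).ncard = n i + n (i + 1) := by
    intro i
    rw [Set.ncard_union_eq ?_ (Set.toFinite _) (Set.toFinite _), hncard_level, hncard_level]
    rw [Set.disjoint_left]
    intro v hv hv'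
    simp only [Set.mem_setOf_eq] at hv hv'
    omega
  have hEncard : ∀ i : ℕ,
      (G.induce ({v | G.dist r v = i} ∪ {v | G.dist r v = i + 1})).edgeSet.ncard = E i := by
    intro i
    rw [induce_edge_count G hconn hbip r i]
    have : {e | e ∈ G.edgeSet ∧ elev G r e = i}
        = ↑(G.edgeFinset.filter fun e => elev G r e = i) := by
      ext e; simp [SimpleGraph.mem_edgeFinset]
    rw [this, Set.ncard_coe_finset]
  -- per-index inequality
  have hle : ∀ i ∈ Finset.range N, 2 * (E i : ℝ) ≤ c * ((n i : ℝ) + (n (i + 1) : ℝ)) := by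
    intro i _
    by_cases hne : ({v | G.dist r v = i} ∪ {v | G.dist r v = i + 1} : Set V).Nonempty
    · have := hcon i hne
      rw [hEncard i, hncard_union i] at this
      push_cast at this
      linarith
    · rw [Set.not_nonempty_iff_eq_empty] at hne
      have hempty : ∀ v : V, G.dist r v ≠ i ∧ G.dist r v ≠ i + 1 := by
        intro v
        constructor <;> intro h <;>
          exact Set.eq_empty_iff_forall_notMem.mp hne v (by simp [h])
      have hni : n i = 0 := by
        rw [hn]; simp only [Finset.card_eq_zero, Finset.filter_eq_empty_iff]
        intro v _; exact (hempty v).1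
      have hni1 : n (i + 1) = 0 := by
        rw [hn]; simp only [Finset.card_eq_zero, Finset.filter_eq_empty_iff]
        intro v _; exact (hempty v).2
      have hEi : E i = 0 := by
        rw [hE]; simp only [Finset.card_eq_zero, Finset.filter_eq_empty_iff]
        intro e he
        revert he
        induction e using Sym2.ind with
        | _ u v =>
          intro he hlev
          rw [elev_mk] at hlev
          rcases min_eq_iff.mp hlev with ⟨h, _⟩ | ⟨h, _⟩
          · exact (hempty u).1 h
          · exact (hempty v).1 h
      rw [hni, hni1, hEi]
      norm_num
  have hstrict : ∃ i ∈ Finset.range N, 2 * (E i : ℝ) < c * ((n i : ℝ) + (n (i + 1) : ℝ)) := by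
    refine ⟨0, Finset.mem_range.mpr (by omega), ?_⟩
    have := hcon 0 ⟨r, hr0'⟩
    rw [hEncard 0, hncard_union 0] at this
    push_cast at this
    linarith
  have hlt : ∑ i ∈ Finset.range N, 2 * (E i : ℝ)
      < ∑ i ∈ Finset.range N, c * ((n i : ℝ) + (n (i + 1) : ℝ)) := by
    obtain ⟨i0, hi0, hs⟩ := hstrict
    exact Finset.sum_lt_sum hle ⟨i0, hi0, hs⟩
  have hL : ∑ i ∈ Finset.range N, 2 * (E i : ℝ) = 2 * (G.edgeFinset.card : ℝ) := by
    rw [← Finset.mul_sum, ← Nat.cast_sum, hsum_E]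
  have hR : ∑ i ∈ Finset.range N, c * ((n i : ℝ) + (n (i + 1) : ℝ))
      ≤ c * (2 * (Fintype.card V : ℝ)) := by
    rw [← Finset.mul_sum]
    apply mul_le_mul_of_nonneg_left _ (le_of_lt hc)
    rw [Finset.sum_add_distrib, ← Nat.cast_sum, ← Nat.cast_sum, hsum_n N le_rfl]
    have := hsum_n1
    push_cast
    exact_mod_cast by
      have h1 : ((∑ i ∈ Finset.range N, n (i+1) : ℕ) : ℝ) ≤ (Fintype.card V : ℝ) := by
        exact_mod_cast hsum_n1
      linarith
  have hcard : (G.edgeSet.ncard : ℝ) = (G.edgeFinset.card : ℝ) := by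
    rw [Set.ncard_eq_toFinset_card']
    congr 2
  rw [hcard] at hdeg
  rw [hL] at hlt
  have := le_trans hR (by linarith : c * (2 * (Fintype.card V : ℝ)) ≤ 2 * (G.edgeFinset.card : ℝ))
  linarith
end
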